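/- Let $F$ be a field of $\operatorname{char}(F) = 2$, $n \geq 2$, and let $\alpha_1,\dots,\alpha_{n+1} \in F^\times$ be such that $1, \alpha_1,\dots,\alpha_{n+1}$ generate over $F^2$ a subfield of degree $2^{n+1}$ in $F$ (equivalently, the monomials $\alpha_1^{e_1}\cdots\alpha_{n+1}^{e_{n+1}}$, $(e_1,\dots,e_{n+1}) \in \{0,1\}^{n+1}$, are $F^2$-linearly independent). Set $V_\varphi = \bigoplus_{(e_1,\dots,e_n) \in \{0,1\}^n \setminus \{0\}} F^2\, \alpha_1^{e_1}\cdots\alpha_n^{e_n}$ and $V_\psi = \bigoplus_{(e_1,\dots,e_{n-1},e_{n+1}) \in \{0,1\}^n \setminus \{0\}} F^2\, \alpha_1^{e_1}\cdots\alpha_{n-2}^{e_{n-2}}(\alpha_{n-1}+1)^{e_{n-1}}\alpha_{n+1}^{e_{n+1}}$, both $F^2$-subspaces of $F$ of dimension $2^n - 1$. Then $V_\varphi \cap V_\psi = W \oplus \alpha_{n-1} W$, where $W = \bigoplus_{(e_1,\dots,e_{n-2}) \in \{0,1\}^{n-2} \setminus \{0\}} F^2\, \alpha_1^{e_1}\cdots\alpha_{n-2}^{e_{n-2}}$;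 in particular $\dim_{F^2}(V_\varphi \cap V_\psi) = 2^{n-1} - 2$. -/

import Mathlib

/-- The `2^m` monomials `∏ uᵢ^{eᵢ}`, `e ∈ {0,1}^m`, are linearly independent over the
subfield `F² = {x² : x ∈ F}`; equivalently, `1, u₁, …, uₘ` generate over `F²` a subfield
of degree `2^m` of `F`. In particular the existence of such a tuple of length `m` says
exactly that `[F : F²] ≥ 2^m`. -/
def TwoIndependent (F : Type) [Field F] {m : ℕ} (u : Fin m → F) : Prop :=
  ∀ c : (Fin m → Bool) → F,
    (∑ e : Fin m → Bool, c e ^ 2 * ∏ i, if e i then u i else 1) = 0 → ∀ e, c e = 0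

/-- The subfield `F² = {x² : x ∈ F}` of a field `F` of characteristic `2`. -/
noncomputable def squaresSubfield (F : Type) [Field F] [CharP F 2] : Subfield F :=
  (frobenius F 2).fieldRange

/-- The monomial `∏ uᵢ^{eᵢ}` associated to `e ∈ {0,1}^m`. -/
noncomputable def pfMonomial (F : Type) [Field F] {m : ℕ} (u : Fin m → F)
    (e : Fin m → Bool) : F :=
  ∏ i, if e i then u i else 1

/-- The `F²`-span of the monomials `∏ uᵢ^{eᵢ}`, `e ∈ {0,1}^m ∖ {0}` — e.g. the set of
values (together with `0`) of the pure part of the bilinear Pfister form `⟨⟨u₁,…,uₘ⟩⟩`. -/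
noncomputable def pureMonomialSpan (F : Type) [Field F] [CharP F 2] {m : ℕ}
    (u : Fin m → F) : Submodule (squaresSubfield F) F :=
  Submodule.span (squaresSubfield F)
    {x : F | ∃ e : Fin m → Bool, e ≠ (fun _ => false) ∧ x = pfMonomial F u e}

/-- As `pureMonomialSpan`, with all monomials multiplied by a fixed scalar `t`. -/
noncomputable def scaledPureMonomialSpan (F : Type) [Field F] [CharP F 2] {m : ℕ}
    (t : F) (u : Fin m → F) : Submodule (squaresSubfield F) F :=
  Submodule.span (squaresSubfield F)
    {x : F | ∃ e : Fin m → Bool, e ≠ (fun _ => false) ∧ x = t * pfMonomial F u e}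

set_option linter.unusedSectionVars false
set_option maxHeartbeats 1000000

section Prelim

variable {F : Type} [Field F] [CharP F 2]

lemma sq_mem_sf (x : F) : x ^ 2 ∈ squaresSubfield F := ⟨x, rfl⟩

lemma sf_smul (s : squaresSubfield F) (x : F) : s • x = (s : F) * x := rfl

lemma exists_sqrt (s : squaresSubfield F) : ∃ c : F, c ^ 2 = (s : F) := s.2

lemma add_eq_zero_iff2 (a b : F) : a + b = 0 ↔ a = b := by
  constructor
  · intro h
    have := CharTwo.add_self_eq_zero b
    calc a = a + (b + b) := by rw [this, add_zero]
    _ = (a + b) + b := by ring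
    _ = b := by rw [h, zero_add]
  · rintro rfl; exact CharTwo.add_self_eq_zero a

lemma snoc_lt {X : Type*} {n : ℕ} (u : Fin n → X) (a : X) (i : Fin (n+1)) (h : i.val < n) :
    (Fin.snoc u a : Fin (n+1) → X) i = u ⟨i.val, h⟩ := by
  simp only [Fin.snoc, h, dif_pos, cast_eq]
  rfl

lemma snoc_ge {X : Type*} {n : ℕ} (u : Fin n → X) (a : X) (i : Fin (n+1)) (h : ¬ i.val < n) :
    (Fin.snoc u a : Fin (n+1) → X) i = a := by
  simp [Fin.snoc, h]

lemma pfMonomial_snoc {n : ℕ} (u : Fin n → F) (a : F) (e : Fin n → Bool) (b : Bool) :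
    pfMonomial F (Fin.snoc u a) (Fin.snoc e b) =
      pfMonomial F u e * (if b then a else 1) := by
  unfold pfMonomial
  rw [Fin.prod_univ_castSucc]
  simp [Fin.snoc_castSucc, Fin.snoc_last]

def snocEquiv (n : ℕ) : ((Fin n → Bool) × Bool) ≃ (Fin (n+1) → Bool) where
  toFun p := Fin.snoc p.1 p.2
  invFun f := (fun i => f i.castSucc, f (Fin.last n))
  left_inv p := by
    ext i
    · simp [Fin.snoc_castSucc]
    · simp [Fin.snoc_last]
  right_inv f := Fin.snoc_init_self f

lemma sum_snoc {M : Type*} [AddCommMonoid M] {n : ℕ} (φ : (Fin (n+1) → Bool) → M) :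
    ∑ e : Fin (n+1) → Bool, φ e = ∑ p : Fin n → Bool, ∑ b : Bool, φ (Fin.snoc p b) := by
  have := (Fintype.sum_equiv (snocEquiv n) (fun q => φ (Fin.snoc q.1 q.2)) φ (fun p => rfl)).symm
  rw [this, Fintype.sum_prod_type]

lemma snoc_eq_zero {n : ℕ} (e : Fin n → Bool) (b : Bool) :
    Fin.snoc e b = (fun _ => false : Fin (n+1) → Bool) ↔
      e = (fun _ => false) ∧ b = false := by
  constructor
  · intro h
    constructor
    · funext i
      have := congrFun h i.castSucc
      simpa [Fin.snoc_castSucc] using this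
    · have := congrFun h (Fin.last n)
      simpa [Fin.snoc_last] using this
  · rintro ⟨rfl, rfl⟩
    funext i
    by_cases h : i.val < n
    · rw [snoc_lt _ _ _ h]
    · rw [snoc_ge _ _ _ h]

lemma zero_snoc (n : ℕ) :
    (Fin.snoc (fun _ => false) false : Fin (n+1) → Bool) = (fun _ => false) :=
  (snoc_eq_zero _ _).mpr ⟨rfl, rfl⟩

lemma snoc2_app_lo {X : Type*} {m : ℕ} (g : Fin m → X) (b1 b2 : X) (i : Fin m) :
    (Fin.snoc (Fin.snoc g b1) b2 : Fin (m+2) → X) (Fin.castLE (by omega) i) = g i := by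
  rw [snoc_lt _ _ _ (show (Fin.castLE (by omega : m ≤ m+2) i).val < m + 1 by
    simpa using i.2.trans (by omega))]
  rw [snoc_lt _ _ _ (show ((⟨(Fin.castLE (by omega : m ≤ m+2) i).val, _⟩ : Fin (m+1))).val < m by
    simpa using i.2)]
  exact congrArg g (Fin.ext (by simp))

lemma snoc2_app_m {X : Type*} {m : ℕ} (g : Fin m → X) (b1 b2 : X) :
    (Fin.snoc (Fin.snoc g b1) b2 : Fin (m+2) → X) ⟨m, by omega⟩ = b1 := by
  rw [snoc_lt _ _ _ (show (⟨m, by omega⟩ : Fin (m+2)).val < m + 1 by simp)]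
  rw [snoc_ge _ _ _ (by simp)]

lemma snoc2_app_m1 {X : Type*} {m : ℕ} (g : Fin m → X) (b1 b2 : X) :
    (Fin.snoc (Fin.snoc g b1) b2 : Fin (m+2) → X) ⟨m+1, by omega⟩ = b2 := by
  rw [snoc_ge _ _ _ (by simp)]

lemma eq_snoc2 {m : ℕ} (e : Fin (m+2) → Bool) :
    e = Fin.snoc (Fin.snoc (fun i : Fin m => e (Fin.castLE (by omega) i))
      (e ⟨m, by omega⟩)) (e ⟨m+1, by omega⟩) := by
  funext i
  by_cases h1 : i.val < m + 1
  · rw [snoc_lt _ _ _ h1]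
    by_cases h0 : i.val < m
    · rw [snoc_lt _ _ _ (show ((⟨i.val, h1⟩ : Fin (m+1))).val < m from h0)]
      exact congrArg e (Fin.ext (by simp))
    · rw [snoc_ge _ _ _ (show ¬((⟨i.val, h1⟩ : Fin (m+1))).val < m from h0)]
      exact congrArg e (Fin.ext (by simp; omega))
  · rw [snoc_ge _ _ _ h1]
    exact congrArg e (Fin.ext (by simp; omega))

lemma mem_span_mono {k : ℕ} (v : (Fin k → Bool) → F) (x : F) :
    x ∈ Submodule.span (squaresSubfield F)
        {x : F | ∃ e : Fin k → Bool, e ≠ (fun _ => false) ∧ x = v e} ↔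
      ∃ c : (Fin k → Bool) → F, c (fun _ => false) = 0 ∧
        x = ∑ e : Fin k → Bool, c e ^ 2 * v e := by
  constructor
  · intro hx
    have hset : {x : F | ∃ e : Fin k → Bool, e ≠ (fun _ => false) ∧ x = v e}
        = Set.range (fun q : {e : Fin k → Bool // e ≠ (fun _ => false)} => v q.1) := by
      ext y
      constructor
      · rintro ⟨e, he, rfl⟩; exact ⟨⟨e, he⟩, rfl⟩
      · rintro ⟨q, rfl⟩; exact ⟨q.1, q.2, rfl⟩
    rw [hset, Submodule.mem_span_range_iff_exists_fun] at hx
    obtain ⟨cK, hcK⟩ := hx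
    choose r hr using fun q => exists_sqrt (cK q)
    classical
    refine ⟨fun e => if h : e ≠ (fun _ => false) then r ⟨e, h⟩ else 0, by simp, ?_⟩
    have h1 : ∀ e : Fin k → Bool,
        (if h : e ≠ (fun _ => false) then r ⟨e, h⟩ else 0) ^ 2 * v e
        = if h : e ≠ (fun _ => false) then r ⟨e, h⟩ ^ 2 * v e else 0 := by
      intro e; split_ifs <;> simp
    rw [Finset.sum_congr rfl (fun e _ => h1 e)]
    have h2 : ∑ e : Fin k → Bool, (if h : e ≠ (fun _ => false) then r ⟨e, h⟩ ^ 2 * v e else 0)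
        = ∑ q : {e : Fin k → Bool // e ≠ (fun _ => false)}, r q ^ 2 * v q.1 := by
      rw [← Finset.sum_filter_of_ne (p := fun e => e ≠ (fun _ => false))
        (by intro e _ h
            by_cases hp : e ≠ (fun _ => false)
            · exact hp
            · rw [dif_neg hp] at h; exact absurd rfl h)]
      rw [Finset.sum_subtype (p := fun e => e ≠ (fun _ => false))
        (Finset.univ.filter _) (by simp) _]
      · exact Finset.sum_congr rfl (fun q _ => by rw [dif_pos q.2])
    rw [h2]
    rw [← hcK]
    exact (Finset.sum_congr rfl (fun q _ => by rw [sf_smul, ← hr q])).symm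
  · rintro ⟨c, hc0, rfl⟩
    apply Submodule.sum_mem
    intro e _
    by_cases he : e = (fun _ => false)
    · rw [he, hc0]; simp
    · have : v e ∈ Submodule.span (squaresSubfield F)
          {x : F | ∃ e : Fin k → Bool, e ≠ (fun _ => false) ∧ x = v e} :=
        Submodule.subset_span ⟨e, he, rfl⟩
      exact Submodule.smul_mem _ ⟨c e ^ 2, sq_mem_sf _⟩ this

lemma mem_pure_iff {k : ℕ} (u : Fin k → F) (x : F) :
    x ∈ pureMonomialSpan F u ↔
      ∃ c : (Fin k → Bool) → F, c (fun _ => false) = 0 ∧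
        x = ∑ e : Fin k → Bool, c e ^ 2 * pfMonomial F u e :=
  mem_span_mono _ x

lemma mem_scaled_iff {k : ℕ} (t : F) (u : Fin k → F) (x : F) :
    x ∈ scaledPureMonomialSpan F t u ↔
      ∃ c : (Fin k → Bool) → F, c (fun _ => false) = 0 ∧
        x = ∑ e : Fin k → Bool, c e ^ 2 * (t * pfMonomial F u e) :=
  mem_span_mono _ x

lemma mem_pure2_iff {m : ℕ} (u : Fin m → F) (A B : F) (x : F) :
    x ∈ pureMonomialSpan F (Fin.snoc (Fin.snoc u A) B) ↔
      ∃ c : (Fin m → Bool) → Bool → Bool → F, c (fun _ => false) false false = 0 ∧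
        x = ∑ g : Fin m → Bool, ∑ b1 : Bool, ∑ b2 : Bool, c g b1 b2 ^ 2 *
          (pfMonomial F u g * (if b1 then A else 1) * (if b2 then B else 1)) := by
  rw [mem_pure_iff]
  constructor
  · rintro ⟨c, hc0, rfl⟩
    refine ⟨fun g b1 b2 => c (Fin.snoc (Fin.snoc g b1) b2), ?_, ?_⟩
    · simpa only [zero_snoc] using hc0
    · rw [sum_snoc (fun e => c e ^ 2 * pfMonomial F (Fin.snoc (Fin.snoc u A) B) e)]
      rw [sum_snoc]
      refine Finset.sum_congr rfl (fun g _ => Finset.sum_congr rfl (fun b1 _ =>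
        Finset.sum_congr rfl (fun b2 _ => ?_)))
      rw [pfMonomial_snoc, pfMonomial_snoc]
  · rintro ⟨c, hc0, rfl⟩
    refine ⟨fun e => c (fun i => e (Fin.castLE (by omega) i)) (e ⟨m, by omega⟩)
      (e ⟨m+1, by omega⟩), ?_, ?_⟩
    · exact hc0
    · rw [sum_snoc (fun e => _ ^ 2 * pfMonomial F (Fin.snoc (Fin.snoc u A) B) e)]
      rw [sum_snoc]
      refine Finset.sum_congr rfl (fun g _ => Finset.sum_congr rfl (fun b1 _ =>
        Finset.sum_congr rfl (fun b2 _ => ?_)))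
      rw [pfMonomial_snoc, pfMonomial_snoc]
      have e1 : (fun i : Fin m =>
          (Fin.snoc (Fin.snoc g b1) b2 : Fin (m+2) → Bool) (Fin.castLE (by omega) i)) = g :=
        funext (fun i => snoc2_app_lo g b1 b2 i)
      rw [e1, snoc2_app_m, snoc2_app_m1]

end Prelim

section Key

variable {F : Type} [Field F] [CharP F 2] {m : ℕ}

/-- The linear independence of the `2^(m+3)` monomials in `u, a1, a2, a3`, in an
    8-block form convenient for computations. -/
def Blocks (u : Fin m → F) (a1 a2 a3 : F) : Prop :=
  ∀ c1 c2 c3 c4 c5 c6 c7 c8 : (Fin m → Bool) → F,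
    (∑ g : Fin m → Bool, c1 g ^ 2 * pfMonomial F u g)
      + (∑ g : Fin m → Bool, c2 g ^ 2 * (pfMonomial F u g * a1))
      + (∑ g : Fin m → Bool, c3 g ^ 2 * (pfMonomial F u g * a2))
      + (∑ g : Fin m → Bool, c4 g ^ 2 * (pfMonomial F u g * a1 * a2))
      + (∑ g : Fin m → Bool, c5 g ^ 2 * (pfMonomial F u g * a3))
      + (∑ g : Fin m → Bool, c6 g ^ 2 * (pfMonomial F u g * a1 * a3))
      + (∑ g : Fin m → Bool, c7 g ^ 2 * (pfMonomial F u g * a2 * a3))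
      + (∑ g : Fin m → Bool, c8 g ^ 2 * (pfMonomial F u g * a1 * a2 * a3)) = 0 →
    (∀ g, c1 g = 0) ∧ (∀ g, c2 g = 0) ∧ (∀ g, c3 g = 0) ∧ (∀ g, c4 g = 0) ∧
    (∀ g, c5 g = 0) ∧ (∀ g, c6 g = 0) ∧ (∀ g, c7 g = 0) ∧ (∀ g, c8 g = 0)

variable {u : Fin m → F} {a1 a2 a3 : F}

lemma ksub_eq_zero {k : (squaresSubfield F)} {r : F} (hr : r ^ 2 = (k : F)) (h : r = 0) :
    k = 0 := by
  apply Subtype.ext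
  rw [← hr, h]
  norm_num

lemma liW (hB : Blocks u a1 a2 a3) :
    LinearIndependent (squaresSubfield F) (fun g : Fin m → Bool => pfMonomial F u g) := by
  rw [Fintype.linearIndependent_iff]
  intro k hk
  choose r hr using fun g => exists_sqrt (k g)
  have h0 : ∑ g : Fin m → Bool, r g ^ 2 * pfMonomial F u g = 0 := by
    rw [← hk]
    exact Finset.sum_congr rfl (fun g _ => by rw [sf_smul, hr g])
  have h := hB r 0 0 0 0 0 0 0 (by simpa using h0)
  exact fun g => ksub_eq_zero (hr g) (h.1 g)

lemma liW' (hB : Blocks u a1 a2 a3) :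
    LinearIndependent (squaresSubfield F) (fun g : Fin m → Bool => a1 * pfMonomial F u g) := by
  rw [Fintype.linearIndependent_iff]
  intro k hk
  choose r hr using fun g => exists_sqrt (k g)
  have h0 : ∑ g : Fin m → Bool, r g ^ 2 * (pfMonomial F u g * a1) = 0 := by
    rw [← hk]
    exact Finset.sum_congr rfl (fun g _ => by rw [sf_smul, hr g]; ring)
  have h := hB 0 r 0 0 0 0 0 0 (by simpa using h0)
  exact fun g => ksub_eq_zero (hr g) (h.2.1 g)

lemma liphi (hB : Blocks u a1 a2 a3) :
    LinearIndependent (squaresSubfield F) (fun q : (Fin m → Bool) × Bool × Bool =>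
      pfMonomial F u q.1 * (if q.2.1 then a1 else 1) * (if q.2.2 then a2 else 1)) := by
  rw [Fintype.linearIndependent_iff]
  intro k hk
  choose r hr using fun q => exists_sqrt (k q)
  have h0 : ∑ q : (Fin m → Bool) × Bool × Bool, r q ^ 2 *
      (pfMonomial F u q.1 * (if q.2.1 then a1 else 1) * (if q.2.2 then a2 else 1)) = 0 := by
    rw [← hk]
    exact Finset.sum_congr rfl (fun q _ => by rw [sf_smul, hr q])
  simp only [Fintype.sum_prod_type, Fintype.sum_bool, if_true, Bool.false_eq_true, if_false,
    mul_one, Finset.sum_add_distrib] at h0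
  have h := hB (fun g => r (g, false, false)) (fun g => r (g, true, false))
    (fun g => r (g, false, true)) (fun g => r (g, true, true)) 0 0 0 0
    (by simp only [Pi.zero_apply, ne_eq, OfNat.ofNat_ne_zero, not_false_eq_true, zero_pow,
      zero_mul, Finset.sum_const_zero, add_zero, zero_add]; linear_combination h0)
  have hz : ∀ q, r q = 0 → k q = 0 := fun q hq => ksub_eq_zero (hr q) hq
  rintro ⟨g, b1, b2⟩
  cases b1 <;> cases b2
  · exact hz _ (h.1 g)
  · exact hz _ (h.2.2.1 g)
  · exact hz _ (h.2.1 g)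
  · exact hz _ (h.2.2.2.1 g)

lemma lipsi (hB : Blocks u a1 a2 a3) :
    LinearIndependent (squaresSubfield F) (fun q : (Fin m → Bool) × Bool × Bool =>
      pfMonomial F u q.1 * (if q.2.1 then a1 + 1 else 1) * (if q.2.2 then a3 else 1)) := by
  rw [Fintype.linearIndependent_iff]
  intro k hk
  choose r hr using fun q => exists_sqrt (k q)
  have h0 : ∑ q : (Fin m → Bool) × Bool × Bool, r q ^ 2 *
      (pfMonomial F u q.1 * (if q.2.1 then a1 + 1 else 1) * (if q.2.2 then a3 else 1)) = 0 := by
    rw [← hk]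
    exact Finset.sum_congr rfl (fun q _ => by rw [sf_smul, hr q])
  simp only [Fintype.sum_prod_type, Fintype.sum_bool, if_true, Bool.false_eq_true, if_false,
    mul_one, Finset.sum_add_distrib] at h0
  -- expand the (a1+1)-blocks
  have e1 : ∑ g : Fin m → Bool, r (g, true, true) ^ 2 * (pfMonomial F u g * (a1 + 1) * a3)
      = ∑ g : Fin m → Bool, r (g, true, true) ^ 2 * (pfMonomial F u g * a1 * a3)
        + ∑ g : Fin m → Bool, r (g, true, true) ^ 2 * (pfMonomial F u g * a3) := by
    rw [← Finset.sum_add_distrib]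
    exact Finset.sum_congr rfl (fun g _ => by ring)
  have e2 : ∑ g : Fin m → Bool, r (g, true, false) ^ 2 * (pfMonomial F u g * (a1 + 1))
      = ∑ g : Fin m → Bool, r (g, true, false) ^ 2 * (pfMonomial F u g * a1)
        + ∑ g : Fin m → Bool, r (g, true, false) ^ 2 * pfMonomial F u g := by
    rw [← Finset.sum_add_distrib]
    exact Finset.sum_congr rfl (fun g _ => by ring)
  rw [e1, e2] at h0
  have s1 : ∑ g : Fin m → Bool, (r (g, false, false) + r (g, true, false)) ^ 2 * pfMonomial F u g
      = ∑ g : Fin m → Bool, r (g, false, false) ^ 2 * pfMonomial F u g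
        + ∑ g : Fin m → Bool, r (g, true, false) ^ 2 * pfMonomial F u g := by
    rw [← Finset.sum_add_distrib]
    exact Finset.sum_congr rfl (fun g _ => by rw [CharTwo.add_sq]; ring)
  have s2 : ∑ g : Fin m → Bool, (r (g, false, true) + r (g, true, true)) ^ 2 *
        (pfMonomial F u g * a3)
      = ∑ g : Fin m → Bool, r (g, false, true) ^ 2 * (pfMonomial F u g * a3)
        + ∑ g : Fin m → Bool, r (g, true, true) ^ 2 * (pfMonomial F u g * a3) := by
    rw [← Finset.sum_add_distrib]
    exact Finset.sum_congr rfl (fun g _ => by rw [CharTwo.add_sq]; ring)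
  have h := hB (fun g => r (g, false, false) + r (g, true, false))
    (fun g => r (g, true, false)) 0 0
    (fun g => r (g, false, true) + r (g, true, true)) (fun g => r (g, true, true)) 0 0
    (by simp only [Pi.zero_apply, ne_eq, OfNat.ofNat_ne_zero, not_false_eq_true, zero_pow,
      zero_mul, Finset.sum_const_zero, add_zero, zero_add]; rw [s1, s2]; linear_combination h0)
  have hz : ∀ q, r q = 0 → k q = 0 := fun q hq => ksub_eq_zero (hr q) hq
  have h2 : ∀ g, r (g, true, false) = 0 := h.2.1
  have h1 : ∀ g, r (g, false, false) = 0 := by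
    intro g
    have hthis : r (g, false, false) + r (g, true, false) = 0 := h.1 g
    rw [h2 g, add_zero] at hthis
    exact hthis
  have h6 : ∀ g, r (g, true, true) = 0 := h.2.2.2.2.2.1
  have h5 : ∀ g, r (g, false, true) = 0 := by
    intro g
    have hthis : r (g, false, true) + r (g, true, true) = 0 := h.2.2.2.2.1 g
    rw [h6 g, add_zero] at hthis
    exact hthis
  rintro ⟨g, b1, b2⟩
  cases b1 <;> cases b2
  · exact hz _ (h1 g)
  · exact hz _ (h5 g)
  · exact hz _ (h2 g)
  · exact hz _ (h6 g)

lemma genW :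
    pureMonomialSpan F u = Submodule.span (squaresSubfield F)
      (Set.range (fun q : {g : Fin m → Bool // g ≠ (fun _ => false)} =>
        pfMonomial F u q.1)) := by
  unfold pureMonomialSpan
  congr 1
  ext y
  constructor
  · rintro ⟨e, he, rfl⟩; exact ⟨⟨e, he⟩, rfl⟩
  · rintro ⟨q, rfl⟩; exact ⟨q.1, q.2, rfl⟩

lemma genW' (t : F) :
    scaledPureMonomialSpan F t u = Submodule.span (squaresSubfield F)
      (Set.range (fun q : {g : Fin m → Bool // g ≠ (fun _ => false)} =>
        t * pfMonomial F u q.1)) := by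
  unfold scaledPureMonomialSpan
  congr 1
  ext y
  constructor
  · rintro ⟨e, he, rfl⟩; exact ⟨⟨e, he⟩, rfl⟩
  · rintro ⟨q, rfl⟩; exact ⟨q.1, q.2, rfl⟩

lemma gen2 (A B : F) :
    pureMonomialSpan F (Fin.snoc (Fin.snoc u A) B) = Submodule.span (squaresSubfield F)
      (Set.range (fun q : {q : (Fin m → Bool) × Bool × Bool //
          q ≠ ⟨fun _ => false, false, false⟩} =>
        pfMonomial F u q.1.1 * (if q.1.2.1 then A else 1) * (if q.1.2.2 then B else 1))) := by
  unfold pureMonomialSpan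
  congr 1
  ext y
  constructor
  · rintro ⟨e, he, rfl⟩
    refine ⟨⟨⟨fun i => e (Fin.castLE (by omega) i), e ⟨m, by omega⟩, e ⟨m+1, by omega⟩⟩, ?_⟩, ?_⟩
    · intro hq
      apply he
      rw [Prod.mk.injEq, Prod.mk.injEq] at hq
      rw [eq_snoc2 e, hq.1, hq.2.1, hq.2.2, zero_snoc, zero_snoc]
    · show _ = pfMonomial F (Fin.snoc (Fin.snoc u A) B) e
      conv_rhs => rw [eq_snoc2 e]
      rw [pfMonomial_snoc, pfMonomial_snoc]
  · rintro ⟨⟨⟨g, b1, b2⟩, hq⟩, rfl⟩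
    refine ⟨Fin.snoc (Fin.snoc g b1) b2, ?_, ?_⟩
    · intro h
      obtain ⟨h1, h2⟩ := (snoc_eq_zero _ _).mp h
      obtain ⟨h3, h4⟩ := (snoc_eq_zero _ _).mp h1
      exact hq (by rw [Prod.mk.injEq, Prod.mk.injEq]; exact ⟨h3, h4, h2⟩)
    · rw [pfMonomial_snoc, pfMonomial_snoc]

lemma card_ne_triple :
    Fintype.card {q : (Fin m → Bool) × Bool × Bool //
        q ≠ ⟨fun _ => false, false, false⟩} = 2 ^ (m + 2) - 1 := by
  have h1 : Fintype.card {q : (Fin m → Bool) × Bool × Bool //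
      q = ⟨fun _ => false, false, false⟩} = 1 := Fintype.card_subtype_eq _
  have h2 := Fintype.card_subtype_compl
    (fun q : (Fin m → Bool) × Bool × Bool => q = ⟨fun _ => false, false, false⟩)
  rw [h1] at h2
  have h3 : Fintype.card ((Fin m → Bool) × Bool × Bool) = 2 ^ (m + 2) := by
    simp [Fintype.card_fun]
    ring
  rw [h3] at h2
  exact h2

lemma card_ne_zero_fun :
    Fintype.card {g : Fin m → Bool // g ≠ (fun _ => false)} = 2 ^ m - 1 := by
  have h1 : Fintype.card {g : Fin m → Bool //
      g = (fun _ => false)} = 1 := Fintype.card_subtype_eq _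
  have h2 := Fintype.card_subtype_compl
    (fun g : Fin m → Bool => g = (fun _ => false))
  rw [h1] at h2
  have h3 : Fintype.card (Fin m → Bool) = 2 ^ m := by
    simp [Fintype.card_fun]
  rw [h3] at h2
  exact h2

lemma finrank_pure2 (hB : Blocks u a1 a2 a3) :
    Module.finrank (squaresSubfield F)
      (pureMonomialSpan F (Fin.snoc (Fin.snoc u a1) a2)) = 2 ^ (m + 2) - 1 := by
  rw [gen2]
  rw [finrank_span_eq_card (b := fun q : {q : (Fin m → Bool) × Bool × Bool //
      q ≠ ⟨fun _ => false, false, false⟩} =>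
      pfMonomial F u q.1.1 * (if q.1.2.1 then a1 else 1) * (if q.1.2.2 then a2 else 1))
    ((liphi hB).comp Subtype.val Subtype.val_injective)]
  exact card_ne_triple

lemma finrank_pure2' (hB : Blocks u a1 a2 a3) :
    Module.finrank (squaresSubfield F)
      (pureMonomialSpan F (Fin.snoc (Fin.snoc u (a1 + 1)) a3)) = 2 ^ (m + 2) - 1 := by
  rw [gen2]
  rw [finrank_span_eq_card (b := fun q : {q : (Fin m → Bool) × Bool × Bool //
      q ≠ ⟨fun _ => false, false, false⟩} =>
      pfMonomial F u q.1.1 * (if q.1.2.1 then a1 + 1 else 1) * (if q.1.2.2 then a3 else 1))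
    ((lipsi hB).comp Subtype.val Subtype.val_injective)]
  exact card_ne_triple

lemma finrank_W (hB : Blocks u a1 a2 a3) :
    Module.finrank (squaresSubfield F) (pureMonomialSpan F u) = 2 ^ m - 1 := by
  rw [genW]
  rw [finrank_span_eq_card (b := fun q : {g : Fin m → Bool // g ≠ (fun _ => false)} =>
      pfMonomial F u q.1) ((liW hB).comp Subtype.val Subtype.val_injective)]
  exact card_ne_zero_fun

lemma finrank_W' (hB : Blocks u a1 a2 a3) :
    Module.finrank (squaresSubfield F) (scaledPureMonomialSpan F a1 u) = 2 ^ m - 1 := by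
  rw [genW']
  rw [finrank_span_eq_card (b := fun q : {g : Fin m → Bool // g ≠ (fun _ => false)} =>
      a1 * pfMonomial F u q.1) ((liW' hB).comp Subtype.val Subtype.val_injective)]
  exact card_ne_zero_fun

lemma disjointWW' (hB : Blocks u a1 a2 a3) :
    Disjoint (pureMonomialSpan F u) (scaledPureMonomialSpan F a1 u) := by
  rw [Submodule.disjoint_def]
  intro x hx hx'
  obtain ⟨c, hc0, hxc⟩ := (mem_pure_iff u x).mp hx
  obtain ⟨d, hd0, hxd⟩ := (mem_scaled_iff a1 u x).mp hx'
  have h0 : (∑ g : Fin m → Bool, c g ^ 2 * pfMonomial F u g)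
      + (∑ g : Fin m → Bool, d g ^ 2 * (a1 * pfMonomial F u g)) = 0 := by
    rw [← hxc, ← hxd]
    exact CharTwo.add_self_eq_zero x
  have e2 : ∑ g : Fin m → Bool, d g ^ 2 * (a1 * pfMonomial F u g)
      = ∑ g : Fin m → Bool, d g ^ 2 * (pfMonomial F u g * a1) :=
    Finset.sum_congr rfl (fun g _ => by ring)
  rw [e2] at h0
  have h := hB c d 0 0 0 0 0 0
    (by simp only [Pi.zero_apply, ne_eq, OfNat.ofNat_ne_zero, not_false_eq_true, zero_pow,
      zero_mul, Finset.sum_const_zero, add_zero, zero_add]; linear_combination h0)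
  rw [hxc]
  apply Finset.sum_eq_zero
  intro g _
  rw [h.1 g]
  ring

lemma infEqSup (hB : Blocks u a1 a2 a3) :
    pureMonomialSpan F (Fin.snoc (Fin.snoc u a1) a2) ⊓
      pureMonomialSpan F (Fin.snoc (Fin.snoc u (a1 + 1)) a3)
    = pureMonomialSpan F u ⊔ scaledPureMonomialSpan F a1 u := by
  apply le_antisymm
  · intro x hx
    obtain ⟨hx1, hx2⟩ := Submodule.mem_inf.mp hx
    obtain ⟨c, hc0, hxc⟩ := (mem_pure2_iff u a1 a2 x).mp hx1
    obtain ⟨d, hd0, hxd⟩ := (mem_pure2_iff u (a1 + 1) a3 x).mp hx2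
    simp only [Fintype.sum_bool, if_true, Bool.false_eq_true, if_false, mul_one,
      Finset.sum_add_distrib] at hxc hxd
    -- expand the (a1+1)-blocks in the ψ-expression
    have e1 : ∑ g : Fin m → Bool, d g true true ^ 2 * (pfMonomial F u g * (a1 + 1) * a3)
        = ∑ g : Fin m → Bool, d g true true ^ 2 * (pfMonomial F u g * a1 * a3)
          + ∑ g : Fin m → Bool, d g true true ^ 2 * (pfMonomial F u g * a3) := by
      rw [← Finset.sum_add_distrib]
      exact Finset.sum_congr rfl (fun g _ => by ring)
    have e2 : ∑ g : Fin m → Bool, d g true false ^ 2 * (pfMonomial F u g * (a1 + 1))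
        = ∑ g : Fin m → Bool, d g true false ^ 2 * (pfMonomial F u g * a1)
          + ∑ g : Fin m → Bool, d g true false ^ 2 * pfMonomial F u g := by
      rw [← Finset.sum_add_distrib]
      exact Finset.sum_congr rfl (fun g _ => by ring)
    rw [e1, e2] at hxd
    have h0 : True := trivial
    have hsum : (∑ g : Fin m → Bool, c g true true ^ 2 * (pfMonomial F u g * a1 * a2)
        + ∑ g : Fin m → Bool, c g false true ^ 2 * (pfMonomial F u g * a2)
        + (∑ g : Fin m → Bool, c g true false ^ 2 * (pfMonomial F u g * a1)
          + ∑ g : Fin m → Bool, c g false false ^ 2 * pfMonomial F u g))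
        + ((∑ g : Fin m → Bool, d g true true ^ 2 * (pfMonomial F u g * a1 * a3)
          + ∑ g : Fin m → Bool, d g true true ^ 2 * (pfMonomial F u g * a3)
          + ∑ g : Fin m → Bool, d g false true ^ 2 * (pfMonomial F u g * a3))
          + (∑ g : Fin m → Bool, d g true false ^ 2 * (pfMonomial F u g * a1)
            + ∑ g : Fin m → Bool, d g true false ^ 2 * pfMonomial F u g
            + ∑ g : Fin m → Bool, d g false false ^ 2 * pfMonomial F u g)) = 0 := by
      rw [← hxc, ← hxd]
      exact CharTwo.add_self_eq_zero x
    -- square-sum recombinations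
    have s1 : ∑ g : Fin m → Bool,
          (c g false false + (d g false false + d g true false)) ^ 2 * pfMonomial F u g
        = ∑ g : Fin m → Bool, c g false false ^ 2 * pfMonomial F u g
          + (∑ g : Fin m → Bool, d g false false ^ 2 * pfMonomial F u g
            + ∑ g : Fin m → Bool, d g true false ^ 2 * pfMonomial F u g) := by
      rw [← Finset.sum_add_distrib, ← Finset.sum_add_distrib]
      exact Finset.sum_congr rfl (fun g _ => by
        rw [CharTwo.add_sq, CharTwo.add_sq]; ring)
    have s2 : ∑ g : Fin m → Bool,
          (c g true false + d g true false) ^ 2 * (pfMonomial F u g * a1)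
        = ∑ g : Fin m → Bool, c g true false ^ 2 * (pfMonomial F u g * a1)
          + ∑ g : Fin m → Bool, d g true false ^ 2 * (pfMonomial F u g * a1) := by
      rw [← Finset.sum_add_distrib]
      exact Finset.sum_congr rfl (fun g _ => by rw [CharTwo.add_sq]; ring)
    have s5 : ∑ g : Fin m → Bool,
          (d g false true + d g true true) ^ 2 * (pfMonomial F u g * a3)
        = ∑ g : Fin m → Bool, d g false true ^ 2 * (pfMonomial F u g * a3)
          + ∑ g : Fin m → Bool, d g true true ^ 2 * (pfMonomial F u g * a3) := by
      rw [← Finset.sum_add_distrib]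
      exact Finset.sum_congr rfl (fun g _ => by rw [CharTwo.add_sq]; ring)
    have h := hB (fun g => c g false false + (d g false false + d g true false))
      (fun g => c g true false + d g true false)
      (fun g => c g false true) (fun g => c g true true)
      (fun g => d g false true + d g true true) (fun g => d g true true) 0 0
      (by simp only [Pi.zero_apply, ne_eq, OfNat.ofNat_ne_zero, not_false_eq_true, zero_pow,
          zero_mul, Finset.sum_const_zero, add_zero, zero_add]
          rw [s1, s2, s5]; linear_combination hsum)
    have h3 : ∀ g, c g false true = 0 := h.2.2.1
    have h4 : ∀ g, c g true true = 0 := h.2.2.2.1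
    have h6 : ∀ g, d g true true = 0 := h.2.2.2.2.2.1
    -- coefficient conditions at the trivial index
    have hdT0 : d (fun _ => false) true false = 0 := by
      have h1 : c (fun _ => false) false false
          + (d (fun _ => false) false false + d (fun _ => false) true false) = 0 :=
        h.1 (fun _ => false)
      rw [hc0, hd0, zero_add, zero_add] at h1
      exact h1
    have hcT0 : c (fun _ => false) true false = 0 := by
      have h2 : c (fun _ => false) true false + d (fun _ => false) true false = 0 :=
        h.2.1 (fun _ => false)
      rw [hdT0, add_zero] at h2
      exact h2
    -- the two summands
    have hy : (∑ g : Fin m → Bool, c g false false ^ 2 * pfMonomial F u g)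
        ∈ pureMonomialSpan F u :=
      (mem_pure_iff u _).mpr ⟨fun g => c g false false, hc0, rfl⟩
    have hz : (∑ g : Fin m → Bool, c g true false ^ 2 * (a1 * pfMonomial F u g))
        ∈ scaledPureMonomialSpan F a1 u :=
      (mem_scaled_iff a1 u _).mpr ⟨fun g => c g true false, hcT0, rfl⟩
    have z3 : ∑ g : Fin m → Bool, c g false true ^ 2 * (pfMonomial F u g * a2) = 0 :=
      Finset.sum_eq_zero (fun g _ => by rw [h3 g]; ring)
    have z4 : ∑ g : Fin m → Bool, c g true true ^ 2 * (pfMonomial F u g * a1 * a2) = 0 :=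
      Finset.sum_eq_zero (fun g _ => by rw [h4 g]; ring)
    have e2' : ∑ g : Fin m → Bool, c g true false ^ 2 * (pfMonomial F u g * a1)
        = ∑ g : Fin m → Bool, c g true false ^ 2 * (a1 * pfMonomial F u g) :=
      Finset.sum_congr rfl (fun g _ => by ring)
    have hxe : x = (∑ g : Fin m → Bool, c g false false ^ 2 * pfMonomial F u g)
        + (∑ g : Fin m → Bool, c g true false ^ 2 * (a1 * pfMonomial F u g)) := by
      rw [hxc]
      linear_combination z4 + z3 + e2'
    rw [hxe]
    exact Submodule.add_mem_sup hy hz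
  · apply sup_le
    · apply le_inf
      · apply Submodule.span_le.mpr
        rintro y ⟨g, hg, rfl⟩
        apply Submodule.subset_span
        refine ⟨Fin.snoc (Fin.snoc g false) false, ?_, ?_⟩
        · intro hzero
          obtain ⟨h1, _⟩ := (snoc_eq_zero _ _).mp hzero
          obtain ⟨h3, _⟩ := (snoc_eq_zero _ _).mp h1
          exact hg h3
        · rw [pfMonomial_snoc, pfMonomial_snoc]
          simp
      · apply Submodule.span_le.mpr
        rintro y ⟨g, hg, rfl⟩
        apply Submodule.subset_span
        refine ⟨Fin.snoc (Fin.snoc g false) false, ?_, ?_⟩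
        · intro hzero
          obtain ⟨h1, _⟩ := (snoc_eq_zero _ _).mp hzero
          obtain ⟨h3, _⟩ := (snoc_eq_zero _ _).mp h1
          exact hg h3
        · rw [pfMonomial_snoc, pfMonomial_snoc]
          simp
    · apply le_inf
      · apply Submodule.span_le.mpr
        rintro y ⟨g, hg, rfl⟩
        apply Submodule.subset_span
        refine ⟨Fin.snoc (Fin.snoc g true) false, ?_, ?_⟩
        · intro hzero
          obtain ⟨h1, _⟩ := (snoc_eq_zero _ _).mp hzero
          obtain ⟨h3, _⟩ := (snoc_eq_zero _ _).mp h1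
          exact hg h3
        · rw [pfMonomial_snoc, pfMonomial_snoc]
          simp [mul_comm]
      · apply Submodule.span_le.mpr
        rintro y ⟨g, hg, rfl⟩
        have hX : pfMonomial F (Fin.snoc (Fin.snoc u (a1 + 1)) a3)
            (Fin.snoc (Fin.snoc g true) false)
            ∈ pureMonomialSpan F (Fin.snoc (Fin.snoc u (a1 + 1)) a3) := by
          apply Submodule.subset_span
          refine ⟨Fin.snoc (Fin.snoc g true) false, ?_, rfl⟩
          intro hzero
          obtain ⟨h1, _⟩ := (snoc_eq_zero _ _).mp hzero
          obtain ⟨_, h4⟩ := (snoc_eq_zero _ _).mp h1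
          exact Bool.noConfusion h4
        have hY : pfMonomial F (Fin.snoc (Fin.snoc u (a1 + 1)) a3)
            (Fin.snoc (Fin.snoc g false) false)
            ∈ pureMonomialSpan F (Fin.snoc (Fin.snoc u (a1 + 1)) a3) := by
          apply Submodule.subset_span
          refine ⟨Fin.snoc (Fin.snoc g false) false, ?_, rfl⟩
          intro hzero
          obtain ⟨h1, _⟩ := (snoc_eq_zero _ _).mp hzero
          obtain ⟨h3, _⟩ := (snoc_eq_zero _ _).mp h1
          exact hg h3
        have hxy : a1 * pfMonomial F u g =
            pfMonomial F (Fin.snoc (Fin.snoc u (a1 + 1)) a3)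
              (Fin.snoc (Fin.snoc g true) false)
            + pfMonomial F (Fin.snoc (Fin.snoc u (a1 + 1)) a3)
              (Fin.snoc (Fin.snoc g false) false) := by
          rw [pfMonomial_snoc, pfMonomial_snoc, pfMonomial_snoc, pfMonomial_snoc]
          simp only [if_true, Bool.false_eq_true, if_false, mul_one]
          have h2 : (2 : F) = 0 := CharTwo.two_eq_zero
          linear_combination (-(pfMonomial F u g)) * h2
        rw [hxy]
        exact Submodule.add_mem _ hX hY

lemma finrank_inf (hB : Blocks u a1 a2 a3) :
    Module.finrank (squaresSubfield F)
      ↥(pureMonomialSpan F (Fin.snoc (Fin.snoc u a1) a2) ⊓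
        pureMonomialSpan F (Fin.snoc (Fin.snoc u (a1 + 1)) a3)) = 2 ^ (m + 1) - 2 := by
  rw [infEqSup hB]
  haveI hfd1 : FiniteDimensional (squaresSubfield F) (pureMonomialSpan F u) := by
    rw [genW]
    exact FiniteDimensional.span_of_finite _ (Set.finite_range _)
  haveI hfd2 : FiniteDimensional (squaresSubfield F) (scaledPureMonomialSpan F a1 u) := by
    rw [genW' a1]
    exact FiniteDimensional.span_of_finite _ (Set.finite_range _)
  have hsum := Submodule.finrank_sup_add_finrank_inf_eq
    (pureMonomialSpan F u) (scaledPureMonomialSpan F a1 u)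
  rw [disjoint_iff.mp (disjointWW' hB)] at hsum
  rw [finrank_W hB, finrank_W' hB] at hsum
  have hbot : Module.finrank (squaresSubfield F)
      (⊥ : Submodule (squaresSubfield F) F) = 0 := finrank_bot _ _
  rw [hbot, add_zero] at hsum
  have hpow : (2:ℕ) ^ (m + 1) = 2 * 2 ^ m := by ring
  have hge : 1 ≤ 2 ^ m := Nat.one_le_two_pow
  omega

end Key

section Glue

variable {F : Type} [Field F] [CharP F 2] {m : ℕ}

lemma gl_le3 (m : ℕ) : m ≤ m + 3 := by omega

lemma gl_le23 (m : ℕ) : m + 2 ≤ m + 3 := by omega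

lemma gl_lt3 (m : ℕ) : m < m + 3 := by omega

lemma gl_lt13 (m : ℕ) : m + 1 < m + 3 := by omega

lemma gl_lt23 (m : ℕ) : m + 2 < m + 3 := by omega

lemma snoc3_app_lo {X : Type*} (g : Fin m → X) (b1 b2 b3 : X) (i : Fin m) :
    (Fin.snoc (Fin.snoc (Fin.snoc g b1) b2) b3 : Fin (m+3) → X)
      (Fin.castLE (gl_le3 m) i) = g i := by
  rw [snoc_lt _ _ _ (show (Fin.castLE (by omega : m ≤ m+3) i).val < m + 2 by
    simpa using i.2.trans (by omega))]
  rw [snoc_lt _ _ _ (show i.val < m + 1 by omega)]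
  rw [snoc_lt _ _ _ (show i.val < m from i.2)]
  exact congrArg g (Fin.ext (by simp))

lemma restrict3 (g : Fin m → Bool) (b1 b2 b3 : Bool) :
    (fun i : Fin m => (Fin.snoc (Fin.snoc (Fin.snoc g b1) b2) b3 : Fin (m+3) → Bool)
      (Fin.castLE (gl_le3 m) i)) = g :=
  funext (fun i => snoc3_app_lo g b1 b2 b3 i)

lemma snoc3_app_m {X : Type*} (g : Fin m → X) (b1 b2 b3 : X) :
    (Fin.snoc (Fin.snoc (Fin.snoc g b1) b2) b3 : Fin (m+3) → X) ⟨m, gl_lt3 m⟩ = b1 := by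
  rw [snoc_lt _ _ _ (show (⟨m, by omega⟩ : Fin (m+3)).val < m + 2 by simp)]
  rw [snoc_lt _ _ _ (show m < m + 1 by omega)]
  rw [snoc_ge _ _ _ (by simp)]

lemma snoc3_app_m1 {X : Type*} (g : Fin m → X) (b1 b2 b3 : X) :
    (Fin.snoc (Fin.snoc (Fin.snoc g b1) b2) b3 : Fin (m+3) → X) ⟨m+1, gl_lt13 m⟩ = b2 := by
  rw [snoc_lt _ _ _ (show (⟨m+1, by omega⟩ : Fin (m+3)).val < m + 2 by simp)]
  rw [snoc_ge _ _ _ (by simp)]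

lemma snoc3_app_m2 {X : Type*} (g : Fin m → X) (b1 b2 b3 : X) :
    (Fin.snoc (Fin.snoc (Fin.snoc g b1) b2) b3 : Fin (m+3) → X) ⟨m+2, gl_lt23 m⟩ = b3 := by
  rw [snoc_ge _ _ _ (by simp)]

lemma eq_snoc3 {X : Type*} (v : Fin (m+3) → X) :
    v = Fin.snoc (Fin.snoc (Fin.snoc (fun i : Fin m => v (Fin.castLE (gl_le3 m) i))
      (v ⟨m, gl_lt3 m⟩)) (v ⟨m+1, gl_lt13 m⟩)) (v ⟨m+2, gl_lt23 m⟩) := by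
  funext i
  by_cases h2 : i.val < m + 2
  · rw [snoc_lt _ _ _ h2]
    by_cases h1 : i.val < m + 1
    · rw [snoc_lt _ _ _ (show ((⟨i.val, h2⟩ : Fin (m+2))).val < m + 1 from h1)]
      by_cases h0 : i.val < m
      · rw [snoc_lt _ _ _ (show ((⟨i.val, h1⟩ : Fin (m+1))).val < m from h0)]
        exact congrArg v (Fin.ext (by simp))
      · rw [snoc_ge _ _ _ (show ¬((⟨i.val, h1⟩ : Fin (m+1))).val < m from h0)]
        exact congrArg v (Fin.ext (by simp; omega))
    · rw [snoc_ge _ _ _ (show ¬((⟨i.val, h2⟩ : Fin (m+2))).val < m + 1 from h1)]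
      exact congrArg v (Fin.ext (by simp; omega))
  · rw [snoc_ge _ _ _ h2]
    exact congrArg v (Fin.ext (by simp; omega))

lemma uphi_eq (α : Fin (m+3) → F) :
    (fun i : Fin (m+2) => α (Fin.castLE (gl_le23 m) i)) =
      Fin.snoc (Fin.snoc (fun i : Fin m => α (Fin.castLE (gl_le3 m) i))
        (α ⟨m, gl_lt3 m⟩)) (α ⟨m+1, gl_lt13 m⟩) := by
  funext i
  by_cases h1 : i.val < m + 1
  · rw [snoc_lt _ _ _ h1]
    by_cases h0 : i.val < m
    · rw [snoc_lt _ _ _ (show ((⟨i.val, h1⟩ : Fin (m+1))).val < m from h0)]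
      exact congrArg α (Fin.ext (by simp))
    · rw [snoc_ge _ _ _ (show ¬((⟨i.val, h1⟩ : Fin (m+1))).val < m from h0)]
      exact congrArg α (Fin.ext (by simp; omega))
  · rw [snoc_ge _ _ _ h1]
    exact congrArg α (Fin.ext (by simp; omega))

lemma blocks_of (α : Fin (m+3) → F) (hα : TwoIndependent F α) :
    Blocks (fun i : Fin m => α (Fin.castLE (gl_le3 m) i))
      (α ⟨m, gl_lt3 m⟩) (α ⟨m+1, gl_lt13 m⟩) (α ⟨m+2, gl_lt23 m⟩) := by
  intro c1 c2 c3 c4 c5 c6 c7 c8 hsum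
  have hprod : ∀ (g : Fin m → Bool) (b1 b2 b3 : Bool),
      (∏ i, if (Fin.snoc (Fin.snoc (Fin.snoc g b1) b2) b3 : Fin (m+3) → Bool) i
        then α i else 1)
      = pfMonomial F (fun i : Fin m => α (Fin.castLE (by omega) i)) g
        * (if b1 then α ⟨m, by omega⟩ else 1)
        * (if b2 then α ⟨m+1, by omega⟩ else 1)
        * (if b3 then α ⟨m+2, by omega⟩ else 1) := by
    intro g b1 b2 b3
    show pfMonomial F α _ = _
    conv_lhs => rw [eq_snoc3 α]
    rw [pfMonomial_snoc, pfMonomial_snoc, pfMonomial_snoc]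
  have hc := hα (fun e =>
    (if e ⟨m+2, by omega⟩ then
      (if e ⟨m+1, by omega⟩ then (if e ⟨m, by omega⟩ then c8 else c7)
        else (if e ⟨m, by omega⟩ then c6 else c5))
    else
      (if e ⟨m+1, by omega⟩ then (if e ⟨m, by omega⟩ then c4 else c3)
        else (if e ⟨m, by omega⟩ then c2 else c1)))
      (fun i => e (Fin.castLE (by omega) i)))
    (by rw [sum_snoc, sum_snoc, sum_snoc]
        simp only [Fintype.sum_bool, hprod, restrict3, snoc3_app_m, snoc3_app_m1, snoc3_app_m2,
          if_true, Bool.false_eq_true, if_false, mul_one, Finset.sum_add_distrib]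
        linear_combination hsum)
  refine ⟨fun g => ?_, fun g => ?_, fun g => ?_, fun g => ?_,
    fun g => ?_, fun g => ?_, fun g => ?_, fun g => ?_⟩
  · have := hc (Fin.snoc (Fin.snoc (Fin.snoc g false) false) false)
    simpa only [restrict3, snoc3_app_m, snoc3_app_m1, snoc3_app_m2,
      if_true, Bool.false_eq_true, if_false] using this
  · have := hc (Fin.snoc (Fin.snoc (Fin.snoc g true) false) false)
    simpa only [restrict3, snoc3_app_m, snoc3_app_m1, snoc3_app_m2,
      if_true, Bool.false_eq_true, if_false] using this
  · have := hc (Fin.snoc (Fin.snoc (Fin.snoc g false) true) false)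
    simpa only [restrict3, snoc3_app_m, snoc3_app_m1, snoc3_app_m2,
      if_true, Bool.false_eq_true, if_false] using this
  · have := hc (Fin.snoc (Fin.snoc (Fin.snoc g true) true) false)
    simpa only [restrict3, snoc3_app_m, snoc3_app_m1, snoc3_app_m2,
      if_true, Bool.false_eq_true, if_false] using this
  · have := hc (Fin.snoc (Fin.snoc (Fin.snoc g false) false) true)
    simpa only [restrict3, snoc3_app_m, snoc3_app_m1, snoc3_app_m2,
      if_true, Bool.false_eq_true, if_false] using this
  · have := hc (Fin.snoc (Fin.snoc (Fin.snoc g true) false) true)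
    simpa only [restrict3, snoc3_app_m, snoc3_app_m1, snoc3_app_m2,
      if_true, Bool.false_eq_true, if_false] using this
  · have := hc (Fin.snoc (Fin.snoc (Fin.snoc g false) true) true)
    simpa only [restrict3, snoc3_app_m, snoc3_app_m1, snoc3_app_m2,
      if_true, Bool.false_eq_true, if_false] using this
  · have := hc (Fin.snoc (Fin.snoc (Fin.snoc g true) true) true)
    simpa only [restrict3, snoc3_app_m, snoc3_app_m1, snoc3_app_m2,
      if_true, Bool.false_eq_true, if_false] using this

end Glue

/-- Let `F` be a field of characteristic `2`, `n = m+2 ≥ 2`, and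
`α₁,…,α_{n+1} ∈ F` such that the monomials `∏ αᵢ^{eᵢ}`, `e ∈ {0,1}^{n+1}`, are
`F²`-linearly independent. Let `V_φ` be the `F²`-span of the nontrivial monomials in
`α₁,…,αₙ` (the value set of the pure part of `φ = ⟨⟨α₁,…,αₙ⟩⟩`), and `V_ψ` the `F²`-span
of the nontrivial monomials in `α₁,…,α_{n-2}, α_{n-1}+1, α_{n+1}` (for
`ψ = ⟨⟨α₁,…,α_{n-2},α_{n-1}+1,α_{n+1}⟩⟩`); both have `F²`-dimension `2ⁿ - 1`. Then
`V_φ ∩ V_ψ = W ⊕ α_{n-1}W` where `W` is the `F²`-span of the nontrivial monomials in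
`α₁,…,α_{n-2}`; in particular `dim_{F²}(V_φ ∩ V_ψ) = 2^{n-1} - 2`. -/
theorem pfister_value_spaces_intersection (F : Type) [Field F] [CharP F 2] (m : ℕ)
    (α : Fin (m + 3) → F) (hα : TwoIndependent F α) :
    Module.finrank (squaresSubfield F)
      ↥(pureMonomialSpan F (fun i : Fin (m + 2) => α (Fin.castLE (by omega) i)))
        = 2 ^ (m + 2) - 1 ∧
    Module.finrank (squaresSubfield F)
      ↥(pureMonomialSpan F
        (Fin.snoc (Fin.snoc (fun i : Fin m => α (Fin.castLE (by omega) i))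
          (α ⟨m, by omega⟩ + 1)) (α ⟨m + 2, by omega⟩)))
        = 2 ^ (m + 2) - 1 ∧
    (pureMonomialSpan F (fun i : Fin (m + 2) => α (Fin.castLE (by omega) i)) ⊓
      pureMonomialSpan F
        (Fin.snoc (Fin.snoc (fun i : Fin m => α (Fin.castLE (by omega) i))
          (α ⟨m, by omega⟩ + 1)) (α ⟨m + 2, by omega⟩)))
      = (pureMonomialSpan F (fun i : Fin m => α (Fin.castLE (by omega) i)) ⊔
         scaledPureMonomialSpan F (α ⟨m, by omega⟩)
           (fun i : Fin m => α (Fin.castLE (by omega) i))) ∧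
    Disjoint (pureMonomialSpan F (fun i : Fin m => α (Fin.castLE (by omega) i)))
      (scaledPureMonomialSpan F (α ⟨m, by omega⟩)
        (fun i : Fin m => α (Fin.castLE (by omega) i))) ∧
    Module.finrank (squaresSubfield F)
      ↥(pureMonomialSpan F (fun i : Fin (m + 2) => α (Fin.castLE (by omega) i)) ⊓
       pureMonomialSpan F
        (Fin.snoc (Fin.snoc (fun i : Fin m => α (Fin.castLE (by omega) i))
          (α ⟨m, by omega⟩ + 1)) (α ⟨m + 2, by omega⟩)))
        = 2 ^ (m + 1) - 2 := by
  have hB := blocks_of α hα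
  rw [uphi_eq α]
  exact ⟨finrank_pure2 hB, finrank_pure2' hB, infEqSup hB, disjointWW' hB, finrank_inf hB⟩
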